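/- Let t, s be unit vectors in ℝ³ with t·s ≠ −1 and t ≠ s, let u = s − t, and let N = n̂ ⊗ n̂ where n̂ is the normalization of t × s. Then N = I − (t ⊗ t + s ⊗ s)/2 − û ⊗ û + E, where the error matrix E satisfies ‖E‖ ≤ C‖u‖² for an absolute constant C (i.e. the expansion N = I − (t⊗t + s⊗s)/2 − û⊗û holds to first order in u). -/

import Mathlib

open Matrix

/-- Euclidean norm on ℝ³. -/
noncomputable def enorm (v : Fin 3 → ℝ) : ℝ := Real.sqrt (v ⬝ᵥ v)

/-- Cross product on ℝ³. -/
def cross3 (a b : Fin 3 → ℝ) : Fin 3 → ℝ :=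
  ![a 1 * b 2 - a 2 * b 1, a 2 * b 0 - a 0 * b 2, a 0 * b 1 - a 1 * b 0]

/-- Skew-symmetric cross-product matrix [v]ₓ. -/
def crossMat (v : Fin 3 → ℝ) : Matrix (Fin 3) (Fin 3) ℝ :=
  !![0, -v 2, v 1; v 2, 0, -v 0; -v 1, v 0, 0]

/-- Normalization x̂ = x / ‖x‖. -/
noncomputable def hat (x : Fin 3 → ℝ) : Fin 3 → ℝ := (_root_.enorm x)⁻¹ • x

/-- Frobenius norm of a 3×3 matrix. -/
noncomputable def frobNorm (M : Matrix (Fin 3) (Fin 3) ℝ) : ℝ :=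
  Real.sqrt (∑ i, ∑ j, (M i j) ^ 2)

lemma crossGram (t s : Fin 3 → ℝ) :
    vecMulVec (cross3 t s) (cross3 t s)
      = ((t ⬝ᵥ t) * (s ⬝ᵥ s) - (t ⬝ᵥ s)^2) • (1 : Matrix (Fin 3) (Fin 3) ℝ)
        - (t ⬝ᵥ t) • vecMulVec s s - (s ⬝ᵥ s) • vecMulVec t t
        + (t ⬝ᵥ s) • (vecMulVec t s + vecMulVec s t) := by
  ext i j
  fin_cases i <;> fin_cases j <;>
    simp [cross3, vecMulVec, Matrix.one_apply, dotProduct, Fin.sum_univ_three] <;> ring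

lemma sumSq (x y : ℝ) (a b m : Fin 3 → ℝ) :
    (∑ i, ∑ j, (y*(a i*a j + b i*b j) - x*(m i*m j))^2)
    = y^2*((a⬝ᵥa)^2 + 2*(a⬝ᵥb)^2 + (b⬝ᵥb)^2) - 2*x*y*((a⬝ᵥm)^2 + (b⬝ᵥm)^2) + x^2*(m⬝ᵥm)^2 := by
  simp [dotProduct, Fin.sum_univ_three]; ring

lemma vecMulVec_smul_self (a : ℝ) (v : Fin 3 → ℝ) :
    vecMulVec (a • v) (a • v) = (a * a) • vecMulVec v v := by
  ext i j; simp [vecMulVec]; ring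

lemma dot_self_nonneg (v : Fin 3 → ℝ) : 0 ≤ v ⬝ᵥ v := by
  simp only [dotProduct]
  exact Finset.sum_nonneg fun k _ => mul_self_nonneg _

lemma dot_self_pos (v : Fin 3 → ℝ) (hv : v ≠ 0) : 0 < v ⬝ᵥ v := by
  obtain ⟨i, hi⟩ := Function.ne_iff.mp hv
  simp only [Pi.zero_apply] at hi
  simp only [dotProduct]
  exact Finset.sum_pos' (fun k _ => mul_self_nonneg _)
    ⟨i, Finset.mem_univ i, mul_self_pos.mpr hi⟩

set_option maxHeartbeats 1000000 in
theorem normal_tensor_expansion :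
    ∃ C : ℝ, 0 < C ∧ ∀ t s : Fin 3 → ℝ, _root_.enorm t = 1 → _root_.enorm s = 1 →
      t ⬝ᵥ s ≠ -1 → t ≠ s →
      frobNorm (vecMulVec (hat (cross3 t s)) (hat (cross3 t s)) -
        (1 - ((2 : ℝ)⁻¹) • (vecMulVec t t + vecMulVec s s) -
          vecMulVec (hat (s - t)) (hat (s - t)))) ≤ C * (_root_.enorm (s - t)) ^ 2 := by
  refine ⟨1, one_pos, ?_⟩
  intro t s ht hs hcn hts
  obtain ⟨c, hc⟩ : ∃ c : ℝ, t ⬝ᵥ s = c := ⟨_, rfl⟩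
  rw [hc] at hcn
  have ht2 : t ⬝ᵥ t = 1 := by
    have h := ht; unfold _root_.enorm at h
    nlinarith [Real.sq_sqrt (dot_self_nonneg t)]
  have hs2 : s ⬝ᵥ s = 1 := by
    have h := hs; unfold _root_.enorm at h
    nlinarith [Real.sq_sqrt (dot_self_nonneg s)]
  have hu2 : (s - t) ⬝ᵥ (s - t) = 2 - 2*c := by
    have : (s - t) ⬝ᵥ (s - t) = s ⬝ᵥ s + t ⬝ᵥ t - 2 * (t ⬝ᵥ s) := by
      simp [dotProduct, Fin.sum_univ_three]; ring
    rw [this, ht2, hs2, hc]; ring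
  have hm2 : (t + s) ⬝ᵥ (t + s) = 2 + 2*c := by
    have : (t + s) ⬝ᵥ (t + s) = s ⬝ᵥ s + t ⬝ᵥ t + 2 * (t ⬝ᵥ s) := by
      simp [dotProduct, Fin.sum_univ_three]; ring
    rw [this, ht2, hs2, hc]; ring
  have hcub : c < 1 := by
    have := dot_self_pos (s - t) (sub_ne_zero.mpr (Ne.symm hts))
    rw [hu2] at this; linarith
  have hclb : -1 < c := by
    have := dot_self_nonneg (t + s)
    rw [hm2] at this
    rcases lt_or_eq_of_le (by linarith : (-1:ℝ) ≤ c) with h | h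
    · exact h
    · exact absurd h.symm hcn
  have h1c : (0:ℝ) < 1 - c^2 := by nlinarith
  have h2mc : (0:ℝ) < 2 - 2*c := by linarith
  have h2pc : (0:ℝ) < 2 + 2*c := by linarith
  have hhatu : vecMulVec (hat (s - t)) (hat (s - t)) = (2 - 2*c)⁻¹ • vecMulVec (s-t) (s-t) := by
    rw [hat, vecMulVec_smul_self]
    congr 1
    rw [_root_.enorm, hu2, ← Real.sqrt_inv, Real.mul_self_sqrt (by positivity)]
  have hn2 : cross3 t s ⬝ᵥ cross3 t s = 1 - c^2 := by
    have : cross3 t s ⬝ᵥ cross3 t s = (t ⬝ᵥ t) * (s ⬝ᵥ s) - (t ⬝ᵥ s)^2 := by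
      simp [cross3, dotProduct, Fin.sum_univ_three]; ring
    rw [this, ht2, hs2, hc]; ring
  have hhatn : vecMulVec (hat (cross3 t s)) (hat (cross3 t s))
      = (1 - c^2)⁻¹ • vecMulVec (cross3 t s) (cross3 t s) := by
    rw [hat, vecMulVec_smul_self]
    congr 1
    rw [_root_.enorm, hn2, ← Real.sqrt_inv, Real.mul_self_sqrt (by positivity)]
  have hne1 : (1:ℝ) - c ≠ 0 := (by linarith : (0:ℝ) < 1 - c).ne'
  have hne2 : (1:ℝ) + c ≠ 0 := (by linarith : (0:ℝ) < 1 + c).ne'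
  have hM : vecMulVec (hat (cross3 t s)) (hat (cross3 t s)) -
        (1 - ((2 : ℝ)⁻¹) • (vecMulVec t t + vecMulVec s s) -
          vecMulVec (hat (s - t)) (hat (s - t)))
      = ((2:ℝ)⁻¹) • (vecMulVec t t + vecMulVec s s)
        - (2 + 2*c)⁻¹ • vecMulVec (t + s) (t + s) := by
    rw [hhatu, hhatn, crossGram, ht2, hs2, hc]
    ext i j
    by_cases hij : i = j
    · subst hij
      simp only [Matrix.sub_apply, Matrix.add_apply, Matrix.smul_apply, Matrix.one_apply_eq,
        vecMulVec_apply, Pi.sub_apply, Pi.add_apply, smul_eq_mul]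
      field_simp
      ring
    · simp only [Matrix.sub_apply, Matrix.add_apply, Matrix.smul_apply,
        Matrix.one_apply_ne hij, vecMulVec_apply, Pi.sub_apply, Pi.add_apply, smul_eq_mul]
      field_simp
      ring
  rw [hM]
  have hfr : (∑ i, ∑ j, ((((2:ℝ)⁻¹) • (vecMulVec t t + vecMulVec s s)
        - (2 + 2*c)⁻¹ • vecMulVec (t + s) (t + s)) i j) ^ 2) = (1 - c)^2 / 2 := by
    have hent : ∀ i j, (((2:ℝ)⁻¹) • (vecMulVec t t + vecMulVec s s)
        - (2 + 2*c)⁻¹ • vecMulVec (t + s) (t + s)) i j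
        = (2:ℝ)⁻¹*(t i*t j + s i*s j) - (2 + 2*c)⁻¹*((t+s) i*((t+s) j)) := by
      intro i j
      simp only [Matrix.sub_apply, Matrix.add_apply, Matrix.smul_apply,
        vecMulVec_apply, smul_eq_mul]
    simp only [hent]
    rw [sumSq]
    have htm : t ⬝ᵥ (t + s) = 1 + c := by rw [dotProduct_add, ht2, hc]
    have hsm : s ⬝ᵥ (t + s) = 1 + c := by
      rw [dotProduct_add, hs2, dotProduct_comm, hc]; ring
    rw [htm, hsm, hm2, ht2, hs2, hc]
    field_simp
    ring
  rw [frobNorm, hfr]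
  have henu : _root_.enorm (s - t) ^ 2 = 2 - 2*c := by
    rw [_root_.enorm, Real.sq_sqrt (by linarith [hu2, h2mc] : (0:ℝ) ≤ (s - t) ⬝ᵥ (s - t)), hu2]
  rw [henu, one_mul]
  calc Real.sqrt ((1 - c)^2 / 2) ≤ Real.sqrt ((2 - 2*c)^2) := by
        apply Real.sqrt_le_sqrt; nlinarith
    _ = 2 - 2*c := by rw [Real.sqrt_sq (by linarith)]
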